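/- Let L/K be a separable quadratic extension of fields, A a quaternion algebra over L admitting an involution τ of the second kind, and let ¯ denote the canonical (quaternion conjugation) involution on A. Then the set of fixed points of the composite map a ↦ τ(ā) is a quaternion algebra B over K (a 4-dimensional central simple K-subalgebra of A) with B ⊗_K L ≅ A. -/

import Mathlib

set_option synthInstance.maxHeartbeats 1000000
set_option maxHeartbeats 1000000

open scoped TensorProduct

/-- Let `L/K` be a separable quadratic extension, `A` a quaternion algebra over `L`
(a 4-dimensional central simple `L`-algebra) with canonical involution `conj`
(the symplectic involution of the first kind, with `a + ā` and `a·ā` in `L`), and `τ` an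
involution of the second kind on `A`. Then the fixed points of `a ↦ τ(ā)` form a
quaternion algebra `B` over `K` (a 4-dimensional central simple `K`-subalgebra of `A`)
with `B ⊗_K L ≅ A`. -/
theorem stmt19 (K L : Type*) [Field K] [Field L] [Algebra K L]
    [Algebra.IsSeparable K L] (hdim : Module.finrank K L = 2)
    (σ : L ≃ₐ[K] L) (hσ : ∃ l, σ l ≠ l)
    (A : Type*) [Ring A] [Algebra L A] [Algebra K A] [IsScalarTower K L A]
    [Algebra.IsCentral L A] [IsSimpleRing A] (hA : Module.finrank L A = 4)
    (conj : A → A)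
    (hconj_add : ∀ x y : A, conj (x + y) = conj x + conj y)
    (hconj_mul : ∀ x y : A, conj (x * y) = conj y * conj x)
    (hconj_smul : ∀ (l : L) (x : A), conj (l • x) = l • conj x)
    (hconj_inv : ∀ x : A, conj (conj x) = x)
    (htrd : ∀ x : A, ∃ t : L, x + conj x = algebraMap L A t)
    (hnrd : ∀ x : A, ∃ m : L, x * conj x = algebraMap L A m)
    (τ : A → A)
    (hτ_add : ∀ x y : A, τ (x + y) = τ x + τ y)
    (hτ_mul : ∀ x y : A, τ (x * y) = τ y * τ x)
    (hτ_inv : ∀ x : A, τ (τ x) = x)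
    (hτ_smul : ∀ (l : L) (x : A), τ (l • x) = σ l • τ x)
    (hτ_alg : ∀ l : L, τ (algebraMap L A l) = algebraMap L A (σ l)) :
    ∃ B : Subalgebra K A,
      (∀ x : A, x ∈ B ↔ τ (conj x) = x) ∧
      Module.finrank K B = 4 ∧ Algebra.IsCentral K B ∧ IsSimpleRing B ∧
      Nonempty (L ⊗[K] B ≃ₐ[L] A) := by
  obtain ⟨l₀, hl₀⟩ := hσ
  have halg_inj : Function.Injective (algebraMap L A) := (algebraMap L A).injective
  -- conj and τ fix 1
  have hτ_surj : Function.Surjective τ := fun y => ⟨τ y, hτ_inv y⟩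
  have hconj_surj : Function.Surjective conj := fun y => ⟨conj y, hconj_inv y⟩
  have hτ1 : τ 1 = 1 := by
    have h : ∀ y : A, y = τ 1 * y := by
      intro y
      obtain ⟨x, rfl⟩ := hτ_surj y
      rw [← hτ_mul, mul_one]
    have := h 1
    rw [mul_one] at this
    exact this.symm
  have hconj1 : conj 1 = 1 := by
    have h : ∀ y : A, y = conj 1 * y := by
      intro y
      obtain ⟨x, rfl⟩ := hconj_surj y
      rw [← hconj_mul, mul_one]
    have := h 1
    rw [mul_one] at this
    exact this.symm
  have hconjL : ∀ m : L, conj (algebraMap L A m) = algebraMap L A m := by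
    intro m
    rw [Algebra.algebraMap_eq_smul_one, hconj_smul, hconj1]
  have hτ0 : τ 0 = 0 := by
    have := hτ_add 0 0
    rw [add_zero] at this
    exact left_eq_add.mp this
  have hconj0 : conj 0 = 0 := by
    have := hconj_add 0 0
    rw [add_zero] at this
    exact left_eq_add.mp this
  -- key: if a ∉ L·1 and c • a ∈ L·1 then c = 0
  have key : ∀ a : A, (¬ ∃ m : L, a = algebraMap L A m) →
      ∀ c m : L, c • a = algebraMap L A m → c = 0 := by
    intro a ha c m h
    by_contra hc
    refine ha ⟨c⁻¹ * m, ?_⟩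
    have := congrArg (fun x => c⁻¹ • x) h
    simp only [smul_smul, inv_mul_cancel₀ hc, one_smul] at this
    rw [this, Algebra.smul_def, ← map_mul]
  -- τ and conj commute
  have hcomm : ∀ x : A, conj (τ x) = τ (conj x) := by
    intro x
    by_cases hx : ∃ m : L, x = algebraMap L A m
    · obtain ⟨m, rfl⟩ := hx
      rw [hτ_alg, hconjL, hconjL, hτ_alg]
    · have hy : ¬ ∃ m : L, τ x = algebraMap L A m := by
        rintro ⟨m, hm⟩
        exact hx ⟨σ m, by rw [← hτ_inv x, hm, hτ_alg]⟩
      obtain ⟨t, ht⟩ := htrd x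
      obtain ⟨m, hm⟩ := hnrd x
      obtain ⟨t', ht'⟩ := htrd (τ x)
      obtain ⟨m', hm'⟩ := hnrd (τ x)
      have h1 : τ (conj x) = algebraMap L A (σ t) - τ x := by
        have := congrArg τ ht
        rw [hτ_add, hτ_alg] at this
        exact eq_sub_of_add_eq' this
      have h2 : conj (τ x) = algebraMap L A t' - τ x := eq_sub_of_add_eq' ht'
      have h3 : τ (conj x) * τ x = algebraMap L A (σ m) := by
        have := congrArg τ hm
        rw [hτ_mul, hτ_alg] at this
        exact this
      have h5 : (σ t - t') • τ x = algebraMap L A (σ m - m') := by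
        have hc : τ x * algebraMap L A t' = algebraMap L A t' * τ x :=
          (Algebra.commutes t' (τ x)).symm
        rw [sub_smul, map_sub, ← h3, ← hm', Algebra.smul_def, Algebra.smul_def, h1, h2,
          sub_mul, mul_sub, hc]
        abel
      have ht'' : σ t = t' := sub_eq_zero.mp (key _ hy _ _ h5)
      rw [h1, h2, ht'']
  -- φ := τ ∘ conj
  set φ : A → A := fun a => τ (conj a) with hφ
  have φ_add : ∀ x y : A, φ (x + y) = φ x + φ y := by
    intro x y; simp only [hφ, hconj_add, hτ_add]
  have φ_mul : ∀ x y : A, φ (x * y) = φ x * φ y := by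
    intro x y; simp only [hφ, hconj_mul, hτ_mul]
  have φ_smul : ∀ (c : L) (x : A), φ (c • x) = σ c • φ x := by
    intro c x; simp only [hφ, hconj_smul, hτ_smul]
  have φ_invol : ∀ x : A, φ (φ x) = x := by
    intro x
    show τ (conj (τ (conj x))) = x
    rw [hcomm (conj x), hconj_inv, hτ_inv]
  have φ_one : φ 1 = 1 := by simp only [hφ, hconj1, hτ1]
  have φ_zero : φ 0 = 0 := by simp only [hφ, hconj0, hτ0]
  have φ_alg : ∀ m : L, φ (algebraMap L A m) = algebraMap L A (σ m) := by
    intro m; simp only [hφ, hconjL, hτ_alg]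
  -- σ is an involution
  have hσσ : ∀ c : L, σ (σ c) = c := by
    intro c
    apply halg_inj
    rw [← φ_alg, ← φ_alg, φ_invol]
  -- the subalgebra B
  set B : Subalgebra K A :=
    { carrier := {a : A | φ a = a}
      mul_mem' := fun {x y} hx hy => by
        simp only [Set.mem_setOf_eq] at *
        rw [φ_mul, hx, hy]
      one_mem' := φ_one
      add_mem' := fun {x y} hx hy => by
        simp only [Set.mem_setOf_eq] at *
        rw [φ_add, hx, hy]
      zero_mem' := φ_zero
      algebraMap_mem' := fun k => by
        simp only [Set.mem_setOf_eq]
        rw [IsScalarTower.algebraMap_apply K L A, φ_alg, AlgEquiv.commutes] } with hB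
  have hmemB : ∀ x : A, x ∈ B ↔ φ x = x := fun x => Iff.rfl
  -- difference scalar
  have hd0 : l₀ - σ l₀ ≠ 0 := sub_ne_zero.mpr (Ne.symm hl₀)
  set d : L := (l₀ - σ l₀)⁻¹ with hdd
  have hd : d ≠ 0 := inv_ne_zero hd0
  have hσd : σ d = -d := by
    rw [hdd, map_inv₀, map_sub, hσσ]
    rw [← neg_sub l₀ (σ l₀), inv_neg]
  -- decomposition A = B ⊕ l₀ • B
  have decomp : ∀ a : A, ∃ b₁ b₂ : A, b₁ ∈ B ∧ b₂ ∈ B ∧ a = b₁ + l₀ • b₂ := by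
    intro a
    have hsubφ : φ (a - φ a) = φ a - a := by
      have h := φ_add (a - φ a) (φ a)
      rw [sub_add_cancel, φ_invol] at h
      exact eq_sub_of_add_eq h.symm
    have hb2 : φ (d • (a - φ a)) = d • (a - φ a) := by
      rw [φ_smul, hσd, hsubφ, neg_smul, smul_sub, smul_sub]
      abel
    refine ⟨a - l₀ • (d • (a - φ a)), d • (a - φ a), ?_, hb2, by abel⟩
    rw [hmemB]
    have hφb1 : φ (a - l₀ • (d • (a - φ a))) =
        φ a - σ l₀ • (d • (a - φ a)) := by
      have hadd := φ_add (a - l₀ • (d • (a - φ a))) (l₀ • (d • (a - φ a)))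
      rw [sub_add_cancel, φ_smul, hb2] at hadd
      exact eq_sub_of_add_eq hadd.symm
    rw [hφb1]
    have hcancel : l₀ • (d • (a - φ a)) - σ l₀ • (d • (a - φ a)) = a - φ a := by
      rw [← sub_smul, smul_smul, mul_inv_cancel₀ hd0, one_smul]
    have hre : φ a - σ l₀ • (d • (a - φ a)) - (a - l₀ • (d • (a - φ a))) =
        (l₀ • (d • (a - φ a)) - σ l₀ • (d • (a - φ a))) - (a - φ a) := by abel
    have : φ a - σ l₀ • (d • (a - φ a)) - (a - l₀ • (d • (a - φ a))) = 0 := by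
      rw [hre, hcancel, sub_self]
    exact sub_eq_zero.mp this
  -- uniqueness
  have uniq : ∀ b₁ b₂ : A, b₁ ∈ B → b₂ ∈ B → b₁ + l₀ • b₂ = 0 → b₁ = 0 ∧ b₂ = 0 := by
    intro b₁ b₂ h1 h2 h
    rw [hmemB] at h1 h2
    have h' : b₁ + σ l₀ • b₂ = 0 := by
      have := congrArg φ h
      rw [φ_add, φ_smul, h1, h2, φ_zero] at this
      exact this
    have hsub : (l₀ - σ l₀) • b₂ = 0 := by
      have hre : (l₀ - σ l₀) • b₂ = (b₁ + l₀ • b₂) - (b₁ + σ l₀ • b₂) := by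
        rw [sub_smul]; abel
      rw [hre, h, h', sub_zero]
    have hb2 : b₂ = 0 := by
      have := congrArg (fun x => (l₀ - σ l₀)⁻¹ • x) hsub
      simpa [smul_smul, inv_mul_cancel₀ hd0] using this
    refine ⟨?_, hb2⟩
    rw [hb2, smul_zero, add_zero] at h
    exact h
  -- finite dimensionality
  haveI : FiniteDimensional K L := Module.finite_of_finrank_pos (by rw [hdim]; norm_num)
  haveI : FiniteDimensional L A := Module.finite_of_finrank_pos (by rw [hA]; norm_num)
  haveI : FiniteDimensional K A := Module.Finite.trans L A
  have hKA : Module.finrank K A = 8 := by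
    rw [← Module.finrank_mul_finrank K L A, hdim, hA]
  -- the K-linear equivalence B × B ≃ A
  have hsmul_comm : ∀ (k : K) (x : A), l₀ • (k • x) = k • (l₀ • x) := by
    intro k x
    rw [← algebraMap_smul L k x, smul_smul, mul_comm, ← smul_smul, algebraMap_smul]
  let g : (B × B) →ₗ[K] A :=
    { toFun := fun p => (p.1 : A) + l₀ • (p.2 : A)
      map_add' := by
        intro p q
        simp only [Prod.fst_add, Prod.snd_add, AddMemClass.coe_add]
        rw [smul_add]
        abel
      map_smul' := by
        intro k p
        simp only [Prod.smul_fst, Prod.smul_snd, SetLike.val_smul, RingHom.id_apply]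
        rw [hsmul_comm, smul_add] }
  have hg : Function.Bijective g := by
    constructor
    · rw [injective_iff_map_eq_zero]
      intro p hp
      obtain ⟨h1, h2⟩ := uniq _ _ p.1.2 p.2.2 hp
      have : p.1 = 0 ∧ p.2 = 0 := ⟨Subtype.ext h1, Subtype.ext h2⟩
      exact Prod.ext this.1 this.2
    · intro a
      obtain ⟨b₁, b₂, h1, h2, rfl⟩ := decomp a
      exact ⟨(⟨b₁, h1⟩, ⟨b₂, h2⟩), rfl⟩
  have hfinB : Module.finrank K B = 4 := by
    have := LinearEquiv.finrank_eq (LinearEquiv.ofBijective g hg)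
    rw [Module.finrank_prod, hKA] at this
    omega
  -- span fact: L = K·1 + K·l₀
  have hspan : ∀ c : L, ∃ k₁ k₂ : K, k₁ • (1 : L) + k₂ • l₀ = c := by
    have hli : LinearIndependent K ![(1 : L), l₀] := by
      rw [LinearIndependent.pair_iff]
      intro s t hst
      have hst' : σ (s • (1 : L) + t • l₀) = 0 := by rw [hst, map_zero]
      rw [map_add, map_smul, map_smul, map_one] at hst'
      have ht : t • (l₀ - σ l₀) = 0 := by
        have hre : t • (l₀ - σ l₀) = (s • (1 : L) + t • l₀) - (s • (1 : L) + t • σ l₀) := by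
          rw [smul_sub]; abel
        rw [hre, hst, hst', sub_zero]
      have ht0 : t = 0 := by
        rcases smul_eq_zero.mp ht with h | h
        · exact h
        · exact absurd h hd0
      subst ht0
      rw [zero_smul, add_zero, ← Algebra.algebraMap_eq_smul_one] at hst
      exact ⟨(map_eq_zero (algebraMap K L)).mp hst, rfl⟩
    have hspan_top : Submodule.span K {(1 : L), l₀} = ⊤ := by
      apply Submodule.eq_top_of_finrank_eq
      rw [hdim]
      have : ({(1 : L), l₀} : Set L) = Set.range ![(1 : L), l₀] := by
        simp only [Matrix.range_cons, Matrix.range_empty, Set.singleton_union,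
          Set.union_empty, Set.union_singleton]
        exact Set.pair_comm 1 l₀
      rw [this, finrank_span_eq_card hli]
      simp
    intro c
    have : c ∈ Submodule.span K {(1 : L), l₀} := hspan_top ▸ Submodule.mem_top
    exact Submodule.mem_span_pair.mp this
  -- fixed points of σ are exactly K
  have hfix : ∀ c : L, σ c = c → ∃ k : K, algebraMap K L k = c := by
    intro c hc
    obtain ⟨k₁, k₂, hk⟩ := hspan c
    have hσc : σ c = k₁ • (1 : L) + k₂ • σ l₀ := by
      conv_lhs => rw [← hk]
      rw [map_add, map_smul, map_smul, map_one]
    have h2 : k₂ • (l₀ - σ l₀) = 0 := by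
      have hre : k₂ • (l₀ - σ l₀) = (k₁ • (1 : L) + k₂ • l₀) - (k₁ • (1 : L) + k₂ • σ l₀) := by
        rw [smul_sub]; abel
      rw [hre, hk, ← hσc, hc, sub_self]
    have hk2 : k₂ = 0 := by
      rcases smul_eq_zero.mp h2 with h | h
      · exact h
      · exact absurd h hd0
    refine ⟨k₁, ?_⟩
    rw [Algebra.algebraMap_eq_smul_one, ← hk, hk2, zero_smul, add_zero]
  -- centrality
  have hcentral : Algebra.IsCentral K B := by
    constructor
    intro z hz
    rw [Subalgebra.mem_center_iff] at hz
    have hzA : (z : A) ∈ Subalgebra.center L A := by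
      rw [Subalgebra.mem_center_iff]
      intro a
      obtain ⟨b₁, b₂, h1, h2, rfl⟩ := decomp a
      have e1 : b₁ * (z : A) = (z : A) * b₁ := by
        have := hz ⟨b₁, h1⟩
        simpa using congrArg (Subtype.val) this
      have e2 : b₂ * (z : A) = (z : A) * b₂ := by
        have := hz ⟨b₂, h2⟩
        simpa using congrArg (Subtype.val) this
      rw [add_mul, mul_add, e1, smul_mul_assoc, mul_smul_comm, e2]
    have := (inferInstance : Algebra.IsCentral L A).out hzA
    rw [Algebra.mem_bot] at this
    obtain ⟨m, hm⟩ := this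
    have hzB : φ (z : A) = (z : A) := z.2
    rw [← hm, φ_alg] at hzB
    have hσm : σ m = m := halg_inj hzB
    obtain ⟨k, hk⟩ := hfix m hσm
    rw [Algebra.mem_bot]
    refine ⟨k, ?_⟩
    apply Subtype.ext
    show algebraMap K A k = (z : A)
    rw [IsScalarTower.algebraMap_apply K L A, hk, hm]
  -- the l₀² relation
  obtain ⟨k₁, k₂, hk12⟩ := hspan (l₀ * l₀)
  have expand : ∀ c₁ c₂ b₁ b₂ : A, (c₁ + l₀ • c₂) * (b₁ + l₀ • b₂) =
      (c₁ * b₁ + k₁ • (c₂ * b₂)) + l₀ • ((c₁ * b₂ + c₂ * b₁) + k₂ • (c₂ * b₂)) := by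
    intro c₁ c₂ b₁ b₂
    have hll : (l₀ * l₀) • (c₂ * b₂) = k₁ • (c₂ * b₂) + k₂ • (l₀ • (c₂ * b₂)) := by
      rw [← hk12, add_smul, smul_assoc, smul_assoc, one_smul]
    rw [add_mul, mul_add, mul_add, mul_smul_comm, smul_mul_assoc, smul_mul_assoc,
      mul_smul_comm, smul_smul, hll, smul_add, smul_add]
    have : l₀ • (k₂ • (c₂ * b₂)) = k₂ • (l₀ • (c₂ * b₂)) := hsmul_comm k₂ _
    rw [this]
    abel
  -- simplicity
  haveI : Nontrivial B := ⟨⟨0, 1, fun h => by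
    have : (0 : A) = 1 := congrArg Subtype.val h
    exact zero_ne_one this⟩⟩
  have hsimple : IsSimpleRing B := by
    haveI hAsimple : IsSimpleOrder (TwoSidedIdeal A) := IsSimpleRing.simple
    constructor
    constructor
    intro I
    by_cases hI : I = ⊥
    · exact Or.inl hI
    · right
      have : ∃ b : B, b ∈ I ∧ b ≠ 0 := by
        by_contra hc
        push_neg at hc
        apply hI
        rw [eq_bot_iff]
        intro x hx
        rw [TwoSidedIdeal.mem_bot]
        by_contra hx0
        exact hx0 (hc x hx)
      obtain ⟨b₀, hb₀I, hb₀0⟩ := this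
      set S : Set A := {x : A | ∃ b₁ b₂ : B, b₁ ∈ I ∧ b₂ ∈ I ∧ x = (b₁ : A) + l₀ • (b₂ : A)}
        with hS
      have hmul_left : ∀ {x y : A}, y ∈ S → x * y ∈ S := by
        rintro x y ⟨b₁, b₂, hb₁, hb₂, rfl⟩
        obtain ⟨c₁, c₂, hc₁, hc₂, rfl⟩ := decomp x
        refine ⟨⟨c₁, hc₁⟩ * b₁ + k₁ • (⟨c₂, hc₂⟩ * b₂),
          (⟨c₁, hc₁⟩ * b₂ + ⟨c₂, hc₂⟩ * b₁) + k₂ • (⟨c₂, hc₂⟩ * b₂), ?_, ?_, ?_⟩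
        · refine TwoSidedIdeal.add_mem _ (I.mul_mem_left _ _ hb₁) ?_
          rw [Algebra.smul_def]
          exact I.mul_mem_left _ _ (I.mul_mem_left _ _ hb₂)
        · refine TwoSidedIdeal.add_mem _
            (TwoSidedIdeal.add_mem _ (I.mul_mem_left _ _ hb₂) (I.mul_mem_left _ _ hb₁)) ?_
          rw [Algebra.smul_def]
          exact I.mul_mem_left _ _ (I.mul_mem_left _ _ hb₂)
        · push_cast
          exact expand c₁ c₂ (b₁ : A) (b₂ : A)
      have hmul_right : ∀ {x y : A}, x ∈ S → x * y ∈ S := by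
        rintro x y ⟨b₁, b₂, hb₁, hb₂, rfl⟩
        obtain ⟨c₁, c₂, hc₁, hc₂, rfl⟩ := decomp y
        refine ⟨b₁ * ⟨c₁, hc₁⟩ + k₁ • (b₂ * ⟨c₂, hc₂⟩),
          (b₁ * ⟨c₂, hc₂⟩ + b₂ * ⟨c₁, hc₁⟩) + k₂ • (b₂ * ⟨c₂, hc₂⟩), ?_, ?_, ?_⟩
        · refine TwoSidedIdeal.add_mem _ (I.mul_mem_right _ _ hb₁) ?_
          rw [Algebra.smul_def, Algebra.commutes]
          exact I.mul_mem_right _ _ (I.mul_mem_right _ _ hb₂)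
        · refine TwoSidedIdeal.add_mem _
            (TwoSidedIdeal.add_mem _ (I.mul_mem_right _ _ hb₁) (I.mul_mem_right _ _ hb₂)) ?_
          rw [Algebra.smul_def, Algebra.commutes]
          exact I.mul_mem_right _ _ (I.mul_mem_right _ _ hb₂)
        · push_cast
          exact expand (b₁ : A) (b₂ : A) c₁ c₂
      set J : TwoSidedIdeal A := TwoSidedIdeal.mk' S
        ⟨0, 0, I.zero_mem, I.zero_mem, by push_cast; simp⟩
        (by
          rintro x y ⟨b₁, b₂, hb₁, hb₂, rfl⟩ ⟨c₁, c₂, hc₁, hc₂, rfl⟩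
          refine ⟨b₁ + c₁, b₂ + c₂, TwoSidedIdeal.add_mem _ hb₁ hc₁,
            TwoSidedIdeal.add_mem _ hb₂ hc₂, ?_⟩
          push_cast
          rw [smul_add]
          abel)
        (by
          rintro x ⟨b₁, b₂, hb₁, hb₂, rfl⟩
          refine ⟨-b₁, -b₂, TwoSidedIdeal.neg_mem _ hb₁, TwoSidedIdeal.neg_mem _ hb₂, ?_⟩
          push_cast
          rw [smul_neg]
          abel)
        hmul_left hmul_right with hJ
      have hJne : J ≠ ⊥ := by
        intro h
        have hmem : (b₀ : A) ∈ J := by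
          rw [hJ, TwoSidedIdeal.mem_mk']
          exact ⟨b₀, 0, hb₀I, I.zero_mem, by push_cast; simp⟩
        rw [h, TwoSidedIdeal.mem_bot] at hmem
        exact hb₀0 (Subtype.ext hmem)
      have hJtop : J = ⊤ := (hAsimple.eq_bot_or_eq_top J).resolve_left hJne
      have h1J : (1 : A) ∈ J := hJtop ▸ TwoSidedIdeal.mem_top A
      rw [hJ, TwoSidedIdeal.mem_mk'] at h1J
      obtain ⟨b₁, b₂, hb₁, hb₂, heq⟩ := h1J
      have heq' : (1 : A) = (b₁ : A) + σ l₀ • (b₂ : A) := by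
        have := congrArg φ heq
        rw [φ_one, φ_add, φ_smul] at this
        rw [this, b₁.2, b₂.2]
      have hsub : (l₀ - σ l₀) • (b₂ : A) = 0 := by
        have hre : (l₀ - σ l₀) • (b₂ : A) =
            ((b₁ : A) + l₀ • (b₂ : A)) - ((b₁ : A) + σ l₀ • (b₂ : A)) := by
          rw [sub_smul]; abel
        rw [hre, ← heq, ← heq', sub_self]
      have hb2 : (b₂ : A) = 0 := by
        have := congrArg (fun x => (l₀ - σ l₀)⁻¹ • x) hsub
        simpa [smul_smul, inv_mul_cancel₀ hd0] using this
      have hb1 : b₁ = 1 := by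
        apply Subtype.ext
        rw [hb2, smul_zero, add_zero] at heq
        exact heq.symm
      exact I.eq_top (hb1 ▸ hb₁)
  -- the tensor product isomorphism
  have hcommute : ∀ (x : L) (y : B), Commute ((Algebra.ofId L A) x) (B.val y) :=
    fun x y => Algebra.commutes x (y : A)
  let ψ : L ⊗[K] B →ₐ[L] A := Algebra.TensorProduct.lift (Algebra.ofId L A) B.val hcommute
  have hψ_surj : Function.Surjective ψ := by
    intro a
    obtain ⟨b₁, b₂, h1, h2, rfl⟩ := decomp a
    refine ⟨(1 : L) ⊗ₜ ⟨b₁, h1⟩ + l₀ ⊗ₜ ⟨b₂, h2⟩, ?_⟩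
    rw [map_add, Algebra.TensorProduct.lift_tmul, Algebra.TensorProduct.lift_tmul]
    simp only [Algebra.ofId_apply, map_one, one_mul, Subalgebra.coe_val]
    rw [Algebra.smul_def]
  have hψ_inj : Function.Injective ψ := by
    have hfr : Module.finrank L (L ⊗[K] B) = Module.finrank L A := by
      rw [Module.finrank_baseChange, hfinB, hA]
    exact (LinearMap.injective_iff_surjective_of_finrank_eq_finrank
      (f := ψ.toLinearMap) hfr).mpr hψ_surj
  exact ⟨B, fun x => hmemB x, hfinB, hcentral, hsimple,
    ⟨AlgEquiv.ofBijective ψ ⟨hψ_inj, hψ_surj⟩⟩⟩
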